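/- Let λ be a positive σ-finite Borel measure on an open set Ω ⊆ ℝᴺ, and let φᵢ : Ω → [0, ∞], i ∈ ℕ, be Borel functions. Then ∫_Ω sup_i φᵢ dλ = sup { Σ_{i ∈ I} ∫_{Aᵢ} φᵢ dλ }, where the supremum is taken over all finite sets I ⊂ ℕ and all finite families {Aᵢ}_{i ∈ I} of pairwise disjoint open sets with compact closure contained in Ω. -/

import Mathlib

open scoped ENNReal
open MeasureTheory Metric Set

/-- Separate finitely many pairwise disjoint compact subsets of an open set `Ω` by
pairwise disjoint open sets with compact closures contained in `Ω`. -/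
lemma aux_separate {X : Type*} [MetricSpace X] [LocallyCompactSpace X]
    {Ω : Set X} (hΩ : IsOpen Ω) (I : Finset ℕ) (K : ℕ → Set X)
    (hK : ∀ i ∈ I, IsCompact (K i)) (hKΩ : ∀ i ∈ I, K i ⊆ Ω)
    (hdisj : ∀ i ∈ I, ∀ j ∈ I, i ≠ j → Disjoint (K i) (K j)) :
    ∃ A : ℕ → Set X, (∀ i ∈ I, K i ⊆ A i) ∧
      (∀ i ∈ I, IsOpen (A i) ∧ IsCompact (closure (A i)) ∧ closure (A i) ⊆ Ω) ∧
      (∀ i ∈ I, ∀ j ∈ I, i ≠ j → Disjoint (A i) (A j)) := by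
  classical
  have h1 : ∀ i ∈ I, ∃ L, IsCompact L ∧ K i ⊆ interior L ∧ L ⊆ Ω := fun i hi =>
    exists_compact_between (hK i hi) hΩ (hKΩ i hi)
  choose! L hLc hKL hLΩ using h1
  have h2 : ∀ i ∈ I, ∃ δ > 0,
      Disjoint (thickening δ (K i)) (thickening δ (⋃ j ∈ I.erase i, K j)) := by
    intro i hi
    have hT : IsCompact (⋃ j ∈ I.erase i, K j) :=
      (I.erase i).finite_toSet.isCompact_biUnion fun j hj => hK j (Finset.mem_of_mem_erase hj)
    have hd : Disjoint (K i) (⋃ j ∈ I.erase i, K j) := by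
      rw [Set.disjoint_iUnion₂_right]
      intro j hj
      exact hdisj i hi j (Finset.mem_of_mem_erase hj) (Ne.symm (Finset.ne_of_mem_erase hj))
    exact hd.exists_thickenings (hK i hi) hT.isClosed
  choose! δ hδpos hδdisj using h2
  refine ⟨fun i => if i ∈ I then interior (L i) ∩ thickening (δ i) (K i) else ∅, ?_, ?_, ?_⟩
  · intro i hi
    simp only [if_pos hi]
    exact subset_inter (hKL i hi) (self_subset_thickening (hδpos i hi) _)
  · intro i hi
    simp only [if_pos hi]
    have hcl : closure (interior (L i) ∩ thickening (δ i) (K i)) ⊆ L i := by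
      refine closure_minimal ?_ (hLc i hi).isClosed
      exact inter_subset_left.trans interior_subset
    exact ⟨isOpen_interior.inter isOpen_thickening,
      (hLc i hi).of_isClosed_subset isClosed_closure hcl, hcl.trans (hLΩ i hi)⟩
  · intro i hi j hj hij
    simp only [if_pos hi, if_pos hj]
    have key : ∀ a ∈ I, ∀ b ∈ I, a ≠ b → δ b ≤ δ a →
        Disjoint (thickening (δ a) (K a)) (thickening (δ b) (K b)) := by
      intro a ha b hb hab hle
      refine Disjoint.mono_right ?_ (hδdisj a ha)
      refine (thickening_mono hle _).trans (thickening_subset_of_subset _ ?_)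
      exact Set.subset_biUnion_of_mem (Finset.mem_erase.2 ⟨Ne.symm hab, hb⟩)
    have hd : Disjoint (thickening (δ i) (K i)) (thickening (δ j) (K j)) := by
      rcases le_total (δ j) (δ i) with h | h
      · exact key i hi j hj hij h
      · exact (key j hj i hi hij.symm h).symm
    exact hd.mono inter_subset_right inter_subset_right

/-- Localization lemma (Ambrosio–Fusco–Pallara, Lemma 2.35): for a σ-finite Borel measure
`λ` on an open set `Ω ⊆ ℝᴺ` and Borel functions `φᵢ : Ω → [0,∞]`,
`∫_Ω sup_i φᵢ dλ = sup { Σ_{i ∈ I} ∫_{Aᵢ} φᵢ dλ }`, the supremum over finite `I ⊂ ℕ` and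
finite families of pairwise disjoint open sets `Aᵢ` with compact closure contained in `Ω`. -/
theorem stmt_12 (N : ℕ) (Ω : Set (EuclideanSpace ℝ (Fin N))) (hΩ : IsOpen Ω)
    (μ : MeasureTheory.Measure (EuclideanSpace ℝ (Fin N)))
    [MeasureTheory.SigmaFinite μ]
    (φ : ℕ → EuclideanSpace ℝ (Fin N) → ℝ≥0∞) (hφ : ∀ i, Measurable (φ i)) :
    ∫⁻ x in Ω, (⨆ i, φ i x) ∂μ =
      ⨆ (I : Finset ℕ) (A : ℕ → Set (EuclideanSpace ℝ (Fin N)))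
        (_ : ∀ i ∈ I, IsOpen (A i) ∧ IsCompact (closure (A i)) ∧ closure (A i) ⊆ Ω)
        (_ : ∀ i ∈ I, ∀ j ∈ I, i ≠ j → Disjoint (A i) (A j)),
        ∑ i ∈ I, ∫⁻ x in A i, φ i x ∂μ := by
  classical
  set RHS := ⨆ (I : Finset ℕ) (A : ℕ → Set (EuclideanSpace ℝ (Fin N)))
      (_ : ∀ i ∈ I, IsOpen (A i) ∧ IsCompact (closure (A i)) ∧ closure (A i) ⊆ Ω)
      (_ : ∀ i ∈ I, ∀ j ∈ I, i ≠ j → Disjoint (A i) (A j)),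
      ∑ i ∈ I, ∫⁻ x in A i, φ i x ∂μ with hRHSdef
  -- the pointwise suprema over finite index ranges
  set g : ℕ → EuclideanSpace ℝ (Fin N) → ℝ≥0∞ := fun m x => ⨆ i ∈ Finset.range (m + 1), φ i x with hgdef
  have hgmeas : ∀ m, Measurable (g m) :=
    fun m => Measurable.iSup fun i => Measurable.iSup_Prop _ (hφ i)
  have hgmono : Monotone g := by
    intro m m' hmm x
    exact iSup_le fun i => iSup_le fun hi =>
      le_iSup₂ (f := fun i (_ : i ∈ Finset.range (m' + 1)) => φ i x) i
        (Finset.mem_range.2 ((Finset.mem_range.1 hi).trans_le (by omega)))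
  -- truncated versions
  set S : ℕ → Set (EuclideanSpace ℝ (Fin N)) := fun m => spanningSets μ m with hSdef
  set h : ℕ → EuclideanSpace ℝ (Fin N) → ℝ≥0∞ := fun m x => (S m).indicator (fun x => min (g m x) m) x with hhdef
  have hhmeas : ∀ m, Measurable (h m) := fun m =>
    ((hgmeas m).min measurable_const).indicator (measurableSet_spanningSets μ m)
  have hhle : ∀ m x, h m x ≤ g m x := by
    intro m x
    by_cases hx : x ∈ S m
    · simp only [hhdef, indicator_of_mem hx]; exact min_le_left _ _
    · simp [hhdef, indicator_of_notMem hx]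
  have hhmono : Monotone h := by
    intro m m' hmm x
    by_cases hx : x ∈ S m
    · have hx' : x ∈ S m' := monotone_spanningSets μ hmm hx
      simp only [hhdef, indicator_of_mem hx, indicator_of_mem hx']
      exact le_min ((min_le_left _ _).trans (hgmono hmm x))
        ((min_le_right _ _).trans (by exact_mod_cast Nat.cast_le.2 hmm))
    · simp [hhdef, indicator_of_notMem hx]
  have hgle : ∀ m x, g m x ≤ ⨆ i, φ i x :=
    fun m x => iSup_le fun i => iSup_le fun _ => le_iSup (fun i => φ i x) i
  have hsup : ∀ x, (⨆ m, h m x) = ⨆ i, φ i x := by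
    intro x
    refine le_antisymm (iSup_le fun m => (hhle m x).trans (hgle m x)) (iSup_le fun i => ?_)
    obtain ⟨m0, hm0⟩ : ∃ m0, x ∈ S m0 := by
      have : x ∈ ⋃ m, S m := by rw [hSdef, iUnion_spanningSets]; trivial
      exact mem_iUnion.1 this
    have key : ∀ m : ℕ, min (φ i x) m ≤ ⨆ m', h m' x := by
      intro m
      refine le_trans ?_ (le_iSup (fun m' => h m' x) (m + i + m0))
      have hxm : x ∈ S (m + i + m0) := monotone_spanningSets μ (by omega) hm0
      simp only [hhdef, indicator_of_mem hxm]
      refine le_min ?_ ((min_le_right _ _).trans (Nat.cast_le.2 (show m ≤ m + i + m0 by omega)))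
      exact (min_le_left _ _).trans (le_iSup₂
        (f := fun j (_ : j ∈ Finset.range (m + i + m0 + 1)) => φ j x) i
        (Finset.mem_range.2 (by omega)))
    have hmin : (⨆ m : ℕ, min (φ i x) (m : ℝ≥0∞)) = φ i x := by
      by_cases ha : φ i x = ⊤
      · simp [ha, min_eq_right le_top, ENNReal.iSup_natCast]
      · obtain ⟨n, hn⟩ := ENNReal.exists_nat_gt ha
        refine le_antisymm (iSup_le fun m => min_le_left _ _) ?_
        exact le_trans (le_of_eq (min_eq_left hn.le).symm)
          (le_iSup (fun m : ℕ => min (φ i x) (m : ℝ≥0∞)) n)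
    calc φ i x = ⨆ m : ℕ, min (φ i x) (m : ℝ≥0∞) := hmin.symm
      _ ≤ ⨆ m', h m' x := iSup_le key
  have hL : ∫⁻ x in Ω, (⨆ i, φ i x) ∂μ = ⨆ m, ∫⁻ x in Ω, h m x ∂μ := by
    rw [← lintegral_iSup hhmeas hhmono]
    exact lintegral_congr fun x => (hsup x).symm
  refine le_antisymm ?_ ?_
  · -- hard direction
    rw [hL]
    refine iSup_le fun m => ?_
    refine ENNReal.le_of_forall_pos_le_add fun ε hε hfin => ?_
    -- partition of Ω according to the first index realizing the max
    set B : ℕ → Set (EuclideanSpace ℝ (Fin N)) := fun i => {x | x ∈ Ω ∧ φ i x = g m x ∧ ∀ j < i, φ j x ≠ g m x}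
      with hBdef
    have heq : ∀ i, MeasurableSet {x : EuclideanSpace ℝ (Fin N) | φ i x = g m x} := by
      intro i
      have : {x : EuclideanSpace ℝ (Fin N) | φ i x = g m x} = {x | φ i x ≤ g m x} ∩ {x | g m x ≤ φ i x} := by
        ext x; simp [le_antisymm_iff]
      rw [this]
      exact (measurableSet_le (hφ i) (hgmeas m)).inter (measurableSet_le (hgmeas m) (hφ i))
    have hBmeas : ∀ i, MeasurableSet (B i) := by
      intro i
      have : B i = Ω ∩ ({x | φ i x = g m x} ∩
          ⋂ (j : ℕ) (_ : j < i), {x : EuclideanSpace ℝ (Fin N) | φ j x = g m x}ᶜ) := by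
        ext x
        simp only [hBdef, mem_setOf_eq, mem_inter_iff, mem_iInter, mem_compl_iff, and_assoc]
      rw [this]
      exact hΩ.measurableSet.inter ((heq i).inter
        (MeasurableSet.iInter fun j => MeasurableSet.iInter fun _ => (heq j).compl))
    have hBsub : ∀ i, B i ⊆ Ω := fun i x hx => hx.1
    have hBdisj : ∀ i j, i ≠ j → Disjoint (B i) (B j) := by
      intro i j hij
      rw [Set.disjoint_left]
      intro x hxi hxj
      rcases hij.lt_or_gt with hlt | hlt
      · exact hxj.2.2 i hlt hxi.2.1
      · exact hxi.2.2 j hlt hxj.2.1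
    have hcover : Ω = ⋃ i ∈ Finset.range (m + 1), B i := by
      ext x
      constructor
      · intro hx
        have hgx : g m x = (Finset.range (m + 1)).sup (fun i => φ i x) :=
          (Finset.sup_eq_iSup _ _).symm
        obtain ⟨b, hbmem, hbe⟩ :=
          Finset.exists_mem_eq_sup (Finset.range (m + 1)) ⟨0, by simp⟩ (fun i => φ i x)
        have hexP : ∃ i, φ i x = g m x := ⟨b, by rw [hgx, hbe]⟩
        have hi0 : φ (Nat.find hexP) x = g m x := Nat.find_spec hexP
        have hi0le : Nat.find hexP ≤ b := Nat.find_min' hexP (by rw [hgx, hbe])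
        refine mem_biUnion (Finset.mem_range.2
          (lt_of_le_of_lt hi0le (Finset.mem_range.1 hbmem))) ?_
        exact ⟨hx, hi0, fun j hj => Nat.find_min hexP hj⟩
      · intro hx
        obtain ⟨i, _, hxB⟩ := mem_iUnion₂.1 hx
        exact hBsub i hxB
    have hsumB : ∫⁻ x in Ω, h m x ∂μ = ∑ i ∈ Finset.range (m + 1), ∫⁻ x in B i, h m x ∂μ := by
      rw [hcover]
      exact lintegral_biUnion_finset (fun i _ j _ hij => hBdisj i j hij)
        (fun i _ => hBmeas i) _
    -- the finite measure with density `h m`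
    set ν : Measure (EuclideanSpace ℝ (Fin N)) := μ.withDensity (h m) with hνdef
    have hν : ∀ s : Set (EuclideanSpace ℝ (Fin N)), MeasurableSet s → ν s = ∫⁻ x in s, h m x ∂μ := fun s hs =>
      withDensity_apply _ hs
    have hνfin : IsFiniteMeasure ν := by
      constructor
      rw [hν univ MeasurableSet.univ, Measure.restrict_univ]
      calc ∫⁻ x, h m x ∂μ ≤ ∫⁻ x, (S m).indicator (fun _ => (m : ℝ≥0∞)) x ∂μ := by
            refine lintegral_mono fun x => ?_
            by_cases hx : x ∈ S m
            · simp only [hhdef, indicator_of_mem hx]; exact min_le_right _ _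
            · simp [hhdef, indicator_of_notMem hx]
        _ = (m : ℝ≥0∞) * μ (S m) := by
            rw [lintegral_indicator (measurableSet_spanningSets μ m), setLIntegral_const]
        _ < ⊤ := ENNReal.mul_lt_top (by simp) (measure_spanningSets_lt_top μ m)
    haveI := hνfin
    set ε' : ℝ≥0∞ := (ε : ℝ≥0∞) / ((m : ℝ≥0∞) + 1) with hε'def
    have hε'ne : ε' ≠ 0 :=
      (ENNReal.div_pos (by exact_mod_cast hε.ne') (by simp)).ne'
    have hKex : ∀ i ∈ Finset.range (m + 1), ∃ K, K ⊆ B i ∧ IsCompact K ∧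
        ν (B i) < ν K + ε' := fun i _ =>
      (hBmeas i).exists_isCompact_lt_add (measure_ne_top _ _) hε'ne
    choose! K hKsub hKcomp hKlt using hKex
    obtain ⟨A, hKA, hAprop, hAdisj⟩ := aux_separate hΩ (Finset.range (m + 1)) K
      (fun i hi => hKcomp i hi) (fun i hi => (hKsub i hi).trans (hBsub i))
      (fun i hi j hj hij => (hBdisj i j hij).mono (hKsub i hi) (hKsub j hj))
    have hfinal : ∑ i ∈ Finset.range (m + 1), ∫⁻ x in A i, φ i x ∂μ ≤ RHS := by
      rw [hRHSdef]
      exact le_iSup_of_le (Finset.range (m + 1)) (le_iSup_of_le A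
        (le_iSup_of_le hAprop (le_iSup_of_le hAdisj le_rfl)))
    calc ∫⁻ x in Ω, h m x ∂μ = ∑ i ∈ Finset.range (m + 1), ν (B i) := by
          rw [hsumB]
          exact Finset.sum_congr rfl fun i _ => (hν _ (hBmeas i)).symm
      _ ≤ ∑ i ∈ Finset.range (m + 1), (ν (K i) + ε') :=
          Finset.sum_le_sum fun i hi => (hKlt i hi).le
      _ = (∑ i ∈ Finset.range (m + 1), ν (K i)) + (m + 1 : ℕ) * ε' := by
          rw [Finset.sum_add_distrib, Finset.sum_const, Finset.card_range, nsmul_eq_mul]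
      _ ≤ (∑ i ∈ Finset.range (m + 1), ∫⁻ x in A i, φ i x ∂μ) + ε := by
          refine add_le_add (Finset.sum_le_sum fun i hi => ?_) ?_
          · rw [hν _ (hKcomp i hi).measurableSet]
            refine le_trans (setLIntegral_mono (hφ i) fun x hx => ?_)
              (lintegral_mono_set (hKA i hi))
            exact (hhle m x).trans_eq (hKsub i hi hx).2.1.symm
          · have : ((m + 1 : ℕ) : ℝ≥0∞) = (m : ℝ≥0∞) + 1 := by push_cast; ring
            rw [this, hε'def]
            exact ENNReal.mul_div_le
      _ ≤ RHS + ε := add_le_add_left hfinal _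
  · -- easy direction
    rw [hRHSdef]
    refine iSup_le fun I => iSup_le fun A => iSup_le fun hA => iSup_le fun hd => ?_
    have hmeasA : ∀ i ∈ I, MeasurableSet (A i) := fun i hi => (hA i hi).1.measurableSet
    calc ∑ i ∈ I, ∫⁻ x in A i, φ i x ∂μ
        ≤ ∑ i ∈ I, ∫⁻ x in A i, (⨆ j, φ j x) ∂μ :=
          Finset.sum_le_sum fun i _ => lintegral_mono fun x => le_iSup (fun j => φ j x) i
      _ = ∫⁻ x in ⋃ i ∈ I, A i, (⨆ j, φ j x) ∂μ :=
          (lintegral_biUnion_finset (fun i hi j hj hij => hd i hi j hj hij) hmeasA _).symm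
      _ ≤ ∫⁻ x in Ω, (⨆ j, φ j x) ∂μ :=
          lintegral_mono_set (iUnion₂_subset fun i hi =>
            subset_closure.trans (hA i hi).2.2)
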